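/- Let T be a tree on a finite nonempty vertex type V, let m be an integer such that every vertex of T has degree at most m, and let G be the m-order V-fractal graph of T. Then for all vertices u, v of T, the distance in G between the original vertices satisfies dist_G(inl u, inl v) = 3·dist_T(u,v). -/

import Mathlib

/-- The `m`-order V-fractal graph of `T`: insert two midpoint vertices on every
edge of `T` (one for each dart) and attach `m - deg_T v` pendant leaves to every
original vertex `v`, so that every original vertex gets degree exactly `m`. -/
def vFractal {V : Type*} [Fintype V] (T : SimpleGraph V) [DecidableRel T.Adj] (m : ℕ) :
    SimpleGraph (V ⊕ (T.Dart ⊕ (Σ v : V, Fin (m - T.degree v)))) :=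
  SimpleGraph.fromRel (fun x y =>
    match x, y with
    | Sum.inl u, Sum.inr (Sum.inl d) => d.fst = u
    | Sum.inr (Sum.inl d), Sum.inr (Sum.inl d') => d' = d.symm
    | Sum.inl u, Sum.inr (Sum.inr p) => u = p.1
    | _, _ => False)

open SimpleGraph

/-- In a tree, distances to the two endpoints of an edge differ by exactly one. -/
lemma tree_adj_dist {V : Type*} {T : SimpleGraph V} (hT : T.IsTree) {a b : V}
    (hab : T.Adj a b) (u : V) :
    T.dist u b = T.dist u a + 1 ∨ T.dist u a = T.dist u b + 1 := by
  classical
  obtain ⟨p, hp, hlen⟩ := hT.isConnected.exists_path_of_dist u a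
  by_cases hb : b ∈ p.support
  · right
    have hspec := p.take_spec hb
    have hlen2 : (p.takeUntil b hb).length + (p.dropUntil b hb).length = p.length := by
      have := congrArg SimpleGraph.Walk.length hspec
      rwa [SimpleGraph.Walk.length_append] at this
    have h1 : T.dist u b ≤ (p.takeUntil b hb).length := SimpleGraph.dist_le _
    have h2 : T.dist b a ≤ (p.dropUntil b hb).length := SimpleGraph.dist_le _
    have hba : T.dist b a = 1 := SimpleGraph.dist_eq_one_iff_adj.mpr hab.symm
    -- upper bound: dist u a ≤ dist u b + 1
    obtain ⟨q, hq⟩ := (hT.isConnected u b).exists_walk_length_eq_dist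
    have h3 : T.dist u a ≤ T.dist u b + 1 := by
      have := SimpleGraph.dist_le (q.concat hab.symm)
      simpa [SimpleGraph.Walk.length_concat, hq] using this
    omega
  · left
    have hq1 : (SimpleGraph.Walk.cons hab.symm p.reverse).IsPath := by
      apply hp.reverse.cons
      simpa using hb
    obtain ⟨q2, hq2p, hq2len⟩ := hT.isConnected.exists_path_of_dist b u
    have := (hT.existsUnique_path b u).unique hq1 hq2p
    have hl := congrArg SimpleGraph.Walk.length this
    simp only [SimpleGraph.Walk.length_cons, SimpleGraph.Walk.length_reverse] at hl
    rw [SimpleGraph.dist_comm] at hq2len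
    omega

theorem dist_vFractal {V : Type*} [Fintype V] [Nonempty V]
    (T : SimpleGraph V) [DecidableRel T.Adj] (hT : T.IsTree)
    (m : ℕ) (hdeg : ∀ v : V, T.degree v ≤ m) (u v : V) :
    (vFractal T m).dist (Sum.inl u) (Sum.inl v) = 3 * T.dist u v := by
  classical
  set G := vFractal T m with hG
  -- basic adjacency facts in G
  have adj1 : ∀ (d : T.Dart), G.Adj (Sum.inl d.fst) (Sum.inr (Sum.inl d)) := by
    intro d
    exact ⟨by simp, Or.inl rfl⟩
  have adj2 : ∀ (d : T.Dart), G.Adj (Sum.inr (Sum.inl d)) (Sum.inr (Sum.inl d.symm)) := by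
    intro d
    refine ⟨?_, Or.inl rfl⟩
    simp only [ne_eq, Sum.inr.injEq, Sum.inl.injEq]
    exact fun h => d.symm_ne h.symm
  -- lifting a walk in T to a walk in G of three times the length
  have lift : ∀ {a b : V} (p : T.Walk a b),
      ∃ q : G.Walk (Sum.inl a) (Sum.inl b), q.length = 3 * p.length := by
    intro a b p
    induction p with
    | nil => exact ⟨SimpleGraph.Walk.nil, by simp⟩
    | @cons x y z h p ih =>
      obtain ⟨q, hq⟩ := ih
      refine ⟨SimpleGraph.Walk.cons (adj1 ⟨(x, y), h⟩)
        (SimpleGraph.Walk.cons (adj2 ⟨(x, y), h⟩)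
          (SimpleGraph.Walk.cons ((adj1 (SimpleGraph.Dart.mk (x,y) h).symm).symm) q)), ?_⟩
      show q.length + 1 + 1 + 1 = 3 * (p.length + 1)
      rw [hq]; ring
  -- upper bound
  obtain ⟨p, hplen⟩ := (hT.isConnected u v).exists_walk_length_eq_dist
  obtain ⟨q, hqlen⟩ := lift p
  have hub : G.dist (Sum.inl u) (Sum.inl v) ≤ 3 * T.dist u v := by
    have := SimpleGraph.dist_le q
    rwa [hqlen, hplen] at this
  -- potential function for the lower bound
  let φ : (V ⊕ (T.Dart ⊕ (Σ w : V, Fin (m - T.degree w)))) → ℕ := fun x =>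
    match x with
    | Sum.inl w => 3 * T.dist u w
    | Sum.inr (Sum.inl d) =>
        if T.dist u d.snd = T.dist u d.fst + 1 then 3 * T.dist u d.fst + 1
        else 3 * T.dist u d.snd + 2
    | Sum.inr (Sum.inr pr) => 3 * T.dist u pr.1
  have edge : ∀ x y, G.Adj x y → φ y ≤ φ x + 1 ∧ φ x ≤ φ y + 1 := by
    intro x y hxy
    obtain ⟨hne, hrel⟩ := hxy
    have key : ∀ x y, (fun x y =>
        match x, y with
        | Sum.inl u, Sum.inr (Sum.inl d) => d.fst = u
        | Sum.inr (Sum.inl d), Sum.inr (Sum.inl d') => d' = d.symm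
        | Sum.inl u, Sum.inr (Sum.inr p) => u = p.1
        | _, _ => False) x y → φ y ≤ φ x + 1 ∧ φ x ≤ φ y + 1 := by
      rintro (w | (d | pr)) (w' | (d' | pr')) hr <;> simp only [] at hr
      · -- inl w, inr inl d' with d'.fst = w
        subst hr
        have hpar := tree_adj_dist hT d'.adj u
        simp only [φ]
        split
        · omega
        · omega
      · -- inl w, inr inr pr'
        subst hr
        simp only [φ]
        omega
      · -- inr inl d, inr inl d' with d' = d.symm
        subst hr
        have hpar := tree_adj_dist hT d.adj u
        have hfst : d.symm.fst = d.snd := rfl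
        have hsnd : d.symm.snd = d.fst := rfl
        simp only [φ, hfst, hsnd]
        split <;> split <;> omega
    rcases hrel with hr | hr
    · exact key x y hr
    · exact (key y x hr).symm
  -- walks in G change φ by at most the length
  have walkbound : ∀ {x y} (W : G.Walk x y), φ y ≤ φ x + W.length := by
    intro x y W
    induction W with
    | nil => simp
    | @cons a b c h W ih =>
      have := (edge a b h).1
      simp only [SimpleGraph.Walk.length_cons]
      omega
  -- lower bound
  have hreach : G.Reachable (Sum.inl u) (Sum.inl v) := ⟨q⟩
  obtain ⟨W, hW⟩ := hreach.exists_walk_length_eq_dist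
  have hlb : 3 * T.dist u v ≤ G.dist (Sum.inl u) (Sum.inl v) := by
    have := walkbound W
    simp only [φ, SimpleGraph.dist_self, Nat.mul_zero] at this
    rwa [hW, Nat.zero_add] at this
  omega
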